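/- Let M, A ∈ ℕ with M ≥ 3 and 2 ≤ A ≤ M − 1. Every Cantor set 𝒞 arising from the iterative construction has Hausdorff dimension δ = log A / log M. -/

import Mathlib

open MeasureTheory Finset Filter Topology
open scoped ENNReal NNReal

namespace FUPRandom

/-- The space of alphabets of cardinality `A` from digits `{0, ..., M-1}`. -/
def Alphabet (M A : ℕ) : Type := {s : Finset (Fin M) // s.card = A}

instance (M A : ℕ) : Fintype (Alphabet M A) := by unfold Alphabet; infer_instance
instance (M A : ℕ) : DecidableEq (Alphabet M A) := by unfold Alphabet; infer_instance
instance (M A : ℕ) : MeasurableSpace (Alphabet M A) := ⊤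

/-- The uniform (counting) probability measure on a finite type. -/
noncomputable def uniformMeasure (α : Type*) [Fintype α] [MeasurableSpace α] : Measure α :=
  (Fintype.card α : ENNReal)⁻¹ • Measure.count

/-- `F_η(𝒜) = (1/A) ∑_{a ∈ 𝒜} e^{-iηa} - (1/M) ∑_{a=0}^{M-1} e^{-iηa}`. -/
noncomputable def Feta (M A : ℕ) (η : ℝ) (𝒜 : Alphabet M A) : ℂ :=
  (A : ℂ)⁻¹ * ∑ a ∈ 𝒜.val, Complex.exp (-(Complex.I * η * (a : ℕ)))
    - (M : ℂ)⁻¹ * ∑ a ∈ Finset.range M, Complex.exp (-(Complex.I * η * a))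

/-- A configuration: for each level `j` (counted from `0`, corresponding to the
`(j+1)`-st iteration of the construction), an alphabet for each of the `A ^ j`
points of the previous level, indexed via `finFunctionFinEquiv`. -/
def Config (M A : ℕ) : Type := (j : ℕ) → (Fin (A ^ j) → Alphabet M A)

instance (M A : ℕ) : MeasurableSpace (Config M A) := by unfold Config; infer_instance

/-- The `k`-th smallest digit of an alphabet, as a natural number. -/
def digit {M A : ℕ} (𝒜 : Alphabet M A) (k : Fin A) : ℕ :=
  ((𝒜.val.orderIsoOfFin 𝒜.prop k : Fin M) : ℕ)

/-- The point of `B_j` indexed by a word `w : Fin j → Fin A`, for a given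
configuration `ω`. -/
noncomputable def cantorPoint (M A : ℕ) (ω : Config M A) : (j : ℕ) → (Fin j → Fin A) → ℝ
  | 0, _ => 0
  | (j + 1), w =>
      cantorPoint M A ω j (fun i => w i.castSucc)
        + (digit (ω j (finFunctionFinEquiv (fun i => w i.castSucc))) (w (Fin.last j)) : ℝ)
          / (M : ℝ) ^ (j + 1)

/-- The `j`-th iteration `𝒞_j` of the Cantor set: a union of `A ^ j` closed
intervals of length `M ^ (-j)`. -/
noncomputable def cantorIter (M A : ℕ) (ω : Config M A) (j : ℕ) : Set ℝ :=
  ⋃ w : Fin j → Fin A,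
    Set.Icc (cantorPoint M A ω j w) (cantorPoint M A ω j w + ((M : ℝ) ^ j)⁻¹)

/-- The Cantor set `𝒞 = ⋂_{j ≥ 1} 𝒞_j`. -/
noncomputable def cantorSet (M A : ℕ) (ω : Config M A) : Set ℝ :=
  ⋂ j ∈ {j : ℕ | 1 ≤ j}, cantorIter M A ω j

/-- The measure `ν_j`, with density `(M/A)^j 1_{𝒞_j}` w.r.t. Lebesgue measure. -/
noncomputable def cantorMeasureIter (M A : ℕ) (ω : Config M A) (j : ℕ) : Measure ℝ :=
  ((M : ENNReal) ^ j / (A : ENNReal) ^ j) • (volume.restrict (cantorIter M A ω j))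

/-- `ν` is the weak limit of the measures `ν_j`. -/
def IsCantorMeasure (M A : ℕ) (ω : Config M A) (ν : Measure ℝ) : Prop :=
  ∀ f : BoundedContinuousFunction ℝ ℝ,
    Tendsto (fun j => ∫ x, f x ∂(cantorMeasureIter M A ω j)) atTop (𝓝 (∫ x, f x ∂ν))

/-- `μ^∞` is the product of the uniform probability measures: a probability
measure on the configuration space whose coordinates are independent and
uniformly distributed. -/
def IsProductUniform (M A : ℕ) (P : Measure (Config M A)) : Prop :=
  IsProbabilityMeasure P ∧
    ProbabilityTheory.iIndepFun (fun j ω => ω j) P ∧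
    ∀ j : ℕ, P.map (fun ω => ω j) = uniformMeasure (Fin (A ^ j) → Alphabet M A)

/-- The Fourier transform `ℱν(ξ) = (2π)^{-1/2} ∫ e^{-ixξ} dν(x)` of a measure. -/
noncomputable def fourierMeasure (ν : Measure ℝ) (ξ : ℝ) : ℂ :=
  (Real.sqrt (2 * Real.pi) : ℂ)⁻¹ * ∫ x, Complex.exp (-(Complex.I * x * ξ)) ∂ν

/-- The Fourier transform `ℱu(ξ) = (2π)^{-1/2} ∫ e^{-ixξ} u(x) dx` of a function. -/
noncomputable def fourierFn (u : ℝ → ℂ) (ξ : ℝ) : ℂ :=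
  (Real.sqrt (2 * Real.pi) : ℂ)⁻¹ * ∫ x : ℝ, Complex.exp (-(Complex.I * x * ξ)) * u x

/-- The semiclassical Fourier transform
`ℱ_h u(ξ) = (2πh)^{-1/2} ∫ e^{-ixξ/h} u(x) dx`. -/
noncomputable def semiclassicalFourier (h : ℝ) (u : ℝ → ℂ) (ξ : ℝ) : ℂ :=
  (Real.sqrt (2 * Real.pi * h) : ℂ)⁻¹ * ∫ x : ℝ, Complex.exp (-(Complex.I * x * ξ / h)) * u x


section Aux

variable {M A : ℕ} (ω : Config M A)

lemma digit_lt (𝒜 : Alphabet M A) (k : Fin A) : digit 𝒜 k < M :=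
  (𝒜.val.orderIsoOfFin 𝒜.prop k : Fin M).2

lemma digit_ne (𝒜 : Alphabet M A) {k k' : Fin A} (h : k ≠ k') : digit 𝒜 k ≠ digit 𝒜 k' := by
  intro hc
  apply h
  have : ((𝒜.val.orderIsoOfFin 𝒜.prop k : Fin M)) = ((𝒜.val.orderIsoOfFin 𝒜.prop k' : Fin M)) :=
    Fin.val_injective hc
  exact (𝒜.val.orderIsoOfFin 𝒜.prop).injective (Subtype.coe_injective this)

lemma cantorPoint_succ (j : ℕ) (w : Fin (j+1) → Fin A) :
    cantorPoint M A ω (j+1) w =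
      cantorPoint M A ω j (fun i => w i.castSucc)
        + (digit (ω j (finFunctionFinEquiv (fun i => w i.castSucc))) (w (Fin.last j)) : ℝ)
          / (M : ℝ) ^ (j + 1) := rfl

lemma cantorPoint_sep (hM : 1 ≤ M) :
    ∀ (j : ℕ) (w w' : Fin j → Fin A), w ≠ w' →
      ((M:ℝ)^j)⁻¹ ≤ |cantorPoint M A ω j w - cantorPoint M A ω j w'| := by
  have hM1 : (1:ℝ) ≤ M := by exact_mod_cast hM
  have hM0 : (0:ℝ) < M := by linarith
  intro j
  induction j with
  | zero => intro w w' h; exact absurd (funext fun i => i.elim0) h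
  | succ j ih =>
    intro w w' hne
    have hMp : (0:ℝ) < (M:ℝ)^(j+1) := by positivity
    rw [cantorPoint_succ, cantorPoint_succ]
    by_cases hp : (fun i : Fin j => w i.castSucc) = (fun i : Fin j => w' i.castSucc)
    · have hlast : w (Fin.last j) ≠ w' (Fin.last j) := by
        intro h
        apply hne
        funext i
        rcases Fin.eq_castSucc_or_eq_last i with ⟨i', rfl⟩ | rfl
        · exact congrFun hp i'
        · exact h
      rw [hp]
      have hd : digit (ω j (finFunctionFinEquiv (fun i : Fin j => w' i.castSucc))) (w (Fin.last j))
          ≠ digit (ω j (finFunctionFinEquiv (fun i : Fin j => w' i.castSucc))) (w' (Fin.last j)) :=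
        digit_ne _ hlast
      set d := digit (ω j (finFunctionFinEquiv (fun i : Fin j => w' i.castSucc))) (w (Fin.last j))
      set d' := digit (ω j (finFunctionFinEquiv (fun i : Fin j => w' i.castSucc))) (w' (Fin.last j))
      have h1 : (1:ℝ) ≤ |(d:ℝ) - (d':ℝ)| := by
        have : (d:ℤ) ≠ (d':ℤ) := by exact_mod_cast hd
        have := Int.one_le_abs (sub_ne_zero.2 this)
        exact_mod_cast this
      have heq : cantorPoint M A ω j (fun i => w' i.castSucc) + (d:ℝ)/(M:ℝ)^(j+1)
          - (cantorPoint M A ω j (fun i => w' i.castSucc) + (d':ℝ)/(M:ℝ)^(j+1))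
          = ((d:ℝ) - d')/(M:ℝ)^(j+1) := by ring
      rw [heq, abs_div, abs_of_pos hMp, inv_eq_one_div]
      gcongr
    · have h1 := ih _ _ hp
      set q := cantorPoint M A ω j (fun i => w i.castSucc) with hq
      set q' := cantorPoint M A ω j (fun i => w' i.castSucc) with hq'
      set d := (digit (ω j (finFunctionFinEquiv (fun i : Fin j => w i.castSucc))) (w (Fin.last j)) : ℝ) with hdd
      set d' := (digit (ω j (finFunctionFinEquiv (fun i : Fin j => w' i.castSucc))) (w' (Fin.last j)) : ℝ) with hdd'
      have hd0 : (0:ℝ) ≤ d := by rw [hdd]; positivity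
      have hd0' : (0:ℝ) ≤ d' := by rw [hdd']; positivity
      have hdM : d ≤ (M:ℝ) - 1 := by
        have h6 := Nat.succ_le_of_lt (digit_lt (ω j (finFunctionFinEquiv (fun i : Fin j => w i.castSucc))) (w (Fin.last j)))
        rw [hdd]
        have h7 : (digit (ω j (finFunctionFinEquiv fun i : Fin j => w i.castSucc)) (w (Fin.last j)) : ℝ) + 1 ≤ M := by
          exact_mod_cast h6
        linarith
      have hdM' : d' ≤ (M:ℝ) - 1 := by
        have h6 := Nat.succ_le_of_lt (digit_lt (ω j (finFunctionFinEquiv (fun i : Fin j => w' i.castSucc))) (w' (Fin.last j)))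
        rw [hdd']
        have h7 : (digit (ω j (finFunctionFinEquiv fun i : Fin j => w' i.castSucc)) (w' (Fin.last j)) : ℝ) + 1 ≤ M := by
          exact_mod_cast h6
        linarith
      have hd : |d/(M:ℝ)^(j+1) - d'/(M:ℝ)^(j+1)| ≤ ((M:ℝ)-1)/(M:ℝ)^(j+1) := by
        rw [div_sub_div_same, abs_div, abs_of_pos hMp]
        gcongr
        rw [abs_sub_le_iff]
        constructor <;> linarith
      have h3 : |q - q'| - |d/(M:ℝ)^(j+1) - d'/(M:ℝ)^(j+1)| ≤
          |q + d/(M:ℝ)^(j+1) - (q' + d'/(M:ℝ)^(j+1))| := by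
        have heq : q - q' = (q + d/(M:ℝ)^(j+1) - (q' + d'/(M:ℝ)^(j+1)))
            + (d'/(M:ℝ)^(j+1) - d/(M:ℝ)^(j+1)) := by ring
        have h4 : |q - q'| ≤ |q + d/(M:ℝ)^(j+1) - (q' + d'/(M:ℝ)^(j+1))|
            + |d'/(M:ℝ)^(j+1) - d/(M:ℝ)^(j+1)| := by
          rw [heq]; exact abs_add_le _ _
        rw [abs_sub_comm (d'/(M:ℝ)^(j+1))] at h4
        linarith
      have h5 : ((M:ℝ)^(j+1))⁻¹ = ((M:ℝ)^j)⁻¹ - ((M:ℝ)-1)/(M:ℝ)^(j+1) := by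
        have hMjne : ((M:ℝ)^j) ≠ 0 := by positivity
        rw [pow_succ]
        field_simp
        try ring
      linarith

/-! ### Base-`A` digits of a real number -/

noncomputable def digitN (A : ℕ) (t : ℝ) (i : ℕ) : ℕ := (⌊t * (A:ℝ)^(i+1)⌋).toNat % A

noncomputable def wpre (A : ℕ) (hA : 0 < A) (t : ℝ) (j : ℕ) : Fin j → Fin A :=
  fun i => ⟨digitN A t i, Nat.mod_lt _ hA⟩

lemma wpre_castSucc (hA : 0 < A) (t : ℝ) (j : ℕ) :
    (fun i : Fin j => wpre A hA t (j+1) i.castSucc) = wpre A hA t j := rfl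

lemma floor_succ (hA : 0 < A) {t : ℝ} (ht : 0 ≤ t) (i : ℕ) :
    ⌊t * (A:ℝ)^(i+1)⌋ = A * ⌊t * (A:ℝ)^i⌋ + digitN A t i := by
  have hA0 : (0:ℝ) < A := by exact_mod_cast hA
  set x := t * (A:ℝ)^i with hx
  have hxnn : 0 ≤ x := by positivity
  have hAx : t * (A:ℝ)^(i+1) = (A:ℝ) * x := by rw [hx]; ring
  have h1 : (A:ℤ) * ⌊x⌋ ≤ ⌊(A:ℝ) * x⌋ := by
    rw [Int.le_floor]
    push_cast
    exact mul_le_mul_of_nonneg_left (Int.floor_le x) hA0.le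
  have h2 : ⌊(A:ℝ) * x⌋ < A * ⌊x⌋ + A := by
    rw [Int.floor_lt]
    push_cast
    have := Int.lt_floor_add_one x
    calc (A:ℝ) * x < (A:ℝ) * (⌊x⌋ + 1) := by
          exact mul_lt_mul_of_pos_left this hA0
      _ = (A:ℝ) * ⌊x⌋ + A := by ring
  have hfl0 : 0 ≤ ⌊(A:ℝ) * x⌋ := Int.floor_nonneg.2 (by positivity)
  have hdig : (digitN A t i : ℤ) = ⌊(A:ℝ) * x⌋ - A * ⌊x⌋ := by
    have htn : ((⌊(A:ℝ) * x⌋).toNat : ℤ) = ⌊(A:ℝ) * x⌋ := Int.toNat_of_nonneg hfl0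
    have : (digitN A t i : ℤ) = ⌊(A:ℝ) * x⌋ % A := by
      unfold digitN
      rw [← hAx] at htn ⊢
      push_cast
      rw [htn]
    rw [this]
    have hr : ⌊(A:ℝ) * x⌋ = (⌊(A:ℝ) * x⌋ - A * ⌊x⌋) + (A:ℤ) * ⌊x⌋ := by ring
    conv_lhs => rw [hr]
    rw [Int.add_mul_emod_self_left]
    exact Int.emod_eq_of_lt (by omega) (by omega)
  rw [hAx, hdig]
  ring

/-- Value of a word as a base-`A` integer. -/
def wordVal (A : ℕ) : (j : ℕ) → (Fin j → Fin A) → ℕ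
  | 0, _ => 0
  | (j+1), w => A * wordVal A j (fun i => w i.castSucc) + (w (Fin.last j)).val

lemma floor_eq_wordVal (hA : 0 < A) {t : ℝ} (ht : t ∈ Set.Ico (0:ℝ) 1) (j : ℕ) :
    ⌊t * (A:ℝ)^j⌋ = wordVal A j (wpre A hA t j) := by
  induction j with
  | zero =>
    simp only [pow_zero, mul_one, wordVal, Nat.cast_zero]
    rw [Int.floor_eq_zero_iff]
    exact ⟨ht.1, ht.2⟩
  | succ j ih =>
    rw [floor_succ hA ht.1 j, ih]
    show _ = ((wordVal A (j+1) (wpre A hA t (j+1)) : ℕ) : ℤ)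
    rw [wordVal, wpre_castSucc]
    push_cast
    congr 1

/-- If `t ∈ [0,1)` then `t` lies in the base-`A` interval given by its first `j` digits. -/
lemma mem_digit_interval (hA : 0 < A) {t : ℝ} (ht : t ∈ Set.Ico (0:ℝ) 1) (j : ℕ) :
    t ∈ Set.Ico ((wordVal A j (wpre A hA t j) : ℝ) / (A:ℝ)^j)
      ((wordVal A j (wpre A hA t j) + 1) / (A:ℝ)^j) := by
  have hA0 : (0:ℝ) < (A:ℝ)^j := by
    have : (0:ℝ) < A := by exact_mod_cast hA
    positivity
  have h := floor_eq_wordVal hA ht j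
  constructor
  · rw [div_le_iff₀ hA0]
    have := Int.floor_le (t * (A:ℝ)^j)
    rw [h] at this
    exact_mod_cast this
  · rw [lt_div_iff₀ hA0]
    have := Int.lt_floor_add_one (t * (A:ℝ)^j)
    rw [h] at this
    exact_mod_cast this

/-! ### The coding map `hfun : [0,1) → 𝒞` -/

noncomputable def pfun (hA : 0 < A) (t : ℝ) (k : ℕ) : ℝ :=
  cantorPoint M A ω k (wpre A hA t k)

lemma pfun_succ (hA : 0 < A) (t : ℝ) (k : ℕ) :
    pfun ω hA t (k+1) = pfun ω hA t k
      + (digit (ω k (finFunctionFinEquiv (wpre A hA t k)))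
          (wpre A hA t (k+1) (Fin.last k)) : ℝ) / (M : ℝ) ^ (k + 1) := rfl

lemma pfun_mono (hA : 0 < A) (t : ℝ) : Monotone (pfun ω hA t) := by
  refine monotone_nat_of_le_succ fun k => ?_
  rw [pfun_succ]
  have : (0:ℝ) ≤ (digit (ω k (finFunctionFinEquiv (wpre A hA t k)))
      (wpre A hA t (k+1) (Fin.last k)) : ℝ) / (M : ℝ) ^ (k + 1) := by positivity
  linarith

lemma pfun_anti (hM : 1 ≤ M) (hA : 0 < A) (t : ℝ) :
    Antitone (fun k => pfun ω hA t k + ((M:ℝ)^k)⁻¹) := by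
  have hM1 : (1:ℝ) ≤ M := by exact_mod_cast hM
  refine antitone_nat_of_succ_le fun k => ?_
  have hMp : (0:ℝ) < (M:ℝ)^(k+1) := by positivity
  have hMkp : (0:ℝ) < (M:ℝ)^k := by positivity
  rw [pfun_succ]
  set d := (digit (ω k (finFunctionFinEquiv (wpre A hA t k)))
      (wpre A hA t (k+1) (Fin.last k)) : ℝ) with hd
  have hd1 : d + 1 ≤ M := by
    have := Nat.succ_le_of_lt (digit_lt (ω k (finFunctionFinEquiv (wpre A hA t k)))
      (wpre A hA t (k+1) (Fin.last k)))
    rw [hd]; exact_mod_cast this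
  have key : d / (M:ℝ)^(k+1) + ((M:ℝ)^(k+1))⁻¹ ≤ ((M:ℝ)^k)⁻¹ := by
    rw [inv_eq_one_div, inv_eq_one_div, ← add_div, div_le_div_iff₀ hMp hMkp, pow_succ]
    have h0 : (0:ℝ) ≤ (M:ℝ)^k := hMkp.le
    nlinarith
  linarith

lemma pfun_bddAbove (hM : 1 ≤ M) (hA : 0 < A) (t : ℝ) :
    BddAbove (Set.range (pfun ω hA t)) := by
  refine ⟨pfun ω hA t 0 + 1, ?_⟩
  rintro x ⟨k, rfl⟩
  have h1 := pfun_anti ω hM hA t (Nat.zero_le k)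
  simp only [pow_zero, inv_one] at h1
  have : (0:ℝ) ≤ ((M:ℝ)^k)⁻¹ := by positivity
  linarith

noncomputable def hfun (hA : 0 < A) (t : ℝ) : ℝ := ⨆ k, pfun ω hA t k

lemma hfun_mem (hM : 1 ≤ M) (hA : 0 < A) (t : ℝ) (j : ℕ) :
    hfun ω hA t ∈ Set.Icc (pfun ω hA t j) (pfun ω hA t j + ((M:ℝ)^j)⁻¹) := by
  constructor
  · exact le_ciSup (pfun_bddAbove ω hM hA t) j
  · refine ciSup_le fun k => ?_
    rcases le_or_gt j k with h | h
    · have h1 := pfun_anti ω hM hA t h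
      have : (0:ℝ) ≤ ((M:ℝ)^k)⁻¹ := by positivity
      simp only at h1
      linarith
    · have h1 := pfun_mono ω hA t h.le
      have : (0:ℝ) ≤ ((M:ℝ)^j)⁻¹ := by positivity
      linarith

lemma hfun_mem_cantorIter (hM : 1 ≤ M) (hA : 0 < A) (t : ℝ) (j : ℕ) :
    hfun ω hA t ∈ cantorIter M A ω j :=
  Set.mem_iUnion.2 ⟨wpre A hA t j, hfun_mem ω hM hA t j⟩

lemma hfun_mem_cantorSet (hM : 1 ≤ M) (hA : 0 < A) (t : ℝ) :
    hfun ω hA t ∈ cantorSet M A ω := by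
  refine Set.mem_iInter₂.2 fun j _ => hfun_mem_cantorIter ω hM hA t j

/-- Key counting estimate: a set of diameter at most `M ^ (-j)` has preimage measure
at most `4 * A ^ (-j)` under the coding map. -/
lemma count_bound (hM : 1 ≤ M) (hA : 0 < A) (j : ℕ) (E : Set ℝ)
    (hE : EMetric.diam E ≤ ENNReal.ofReal (((M:ℝ)^j)⁻¹)) :
    (volume.restrict (Set.Ico (0:ℝ) 1)) ((fun t => hfun ω hA t) ⁻¹' E)
      ≤ 4 * ENNReal.ofReal (((A:ℝ)^j)⁻¹) := by
  classical
  rcases E.eq_empty_or_nonempty with rfl | ⟨x₀, hx₀⟩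
  · simp
  have hM1 : (1:ℝ) ≤ M := by exact_mod_cast hM
  have hA0 : (0:ℝ) < A := by exact_mod_cast hA
  set L : ℝ := ((M:ℝ)^j)⁻¹ with hLdef
  have hL0 : 0 < L := by rw [hLdef]; positivity
  set P : (Fin j → Fin A) → ℝ := fun w => cantorPoint M A ω j w with hP
  set V : Finset (Fin j → Fin A) :=
    Finset.univ.filter (fun w => (Set.Icc (P w) (P w + L) ∩ E).Nonempty) with hV
  set J : (Fin j → Fin A) → Set ℝ := fun w =>
    Set.Ico ((wordVal A j w : ℝ) / (A:ℝ)^j) (((wordVal A j w : ℝ) + 1) / (A:ℝ)^j) with hJ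
  have hsub : (fun t => hfun ω hA t) ⁻¹' E ⊆ (⋃ w ∈ V, J w) ∪ (Set.Ico (0:ℝ) 1)ᶜ := by
    intro t ht
    by_cases h01 : t ∈ Set.Ico (0:ℝ) 1
    · left
      have hmemV : wpre A hA t j ∈ V := by
        rw [hV]
        simp only [Finset.mem_filter, Finset.mem_univ, true_and]
        exact ⟨hfun ω hA t, hfun_mem ω hM hA t j, ht⟩
      exact Set.mem_biUnion hmemV (mem_digit_interval hA h01 j)
    · right; exact h01
  have hdist : ∀ w ∈ V, P w ∈ Set.Icc (x₀ - 2*L) (x₀ + L) := by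
    intro w hw
    rw [hV, Finset.mem_filter] at hw
    obtain ⟨-, x, ⟨hx1, hx2⟩, hxE⟩ := hw
    have hdxx : dist x x₀ ≤ L := by
      have h1 : edist x x₀ ≤ EMetric.diam E := EMetric.edist_le_diam_of_mem hxE hx₀
      have h2 : ENNReal.ofReal (dist x x₀) ≤ ENNReal.ofReal L := by
        rw [← edist_dist]; exact h1.trans hE
      exact (ENNReal.ofReal_le_ofReal_iff hL0.le).1 h2
    rw [Real.dist_eq, abs_sub_le_iff] at hdxx
    constructor <;> linarith
  have hcard : V.card ≤ 4 := by
    have h4 : (Finset.range 4).card = 4 := Finset.card_range 4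
    rw [← h4]
    refine Finset.card_le_card_of_injOn
      (fun w => (⌊(P w - (x₀ - 2*L))/L⌋).toNat) ?_ ?_
    · intro w hw
      obtain ⟨h1, h2⟩ := hdist w hw
      have hu0 : 0 ≤ (P w - (x₀ - 2*L))/L := div_nonneg (by linarith) hL0.le
      have hu4 : (P w - (x₀ - 2*L))/L < 4 := by
        rw [div_lt_iff₀ hL0]; linarith
      have hf4 : ⌊(P w - (x₀ - 2*L))/L⌋ < 4 := by
        apply Int.floor_lt.2
        exact_mod_cast hu4
      refine Finset.mem_range.2 ?_
      show (⌊(P w - (x₀ - 2*L))/L⌋).toNat < 4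
      omega
    · intro w hw w' hw' heq
      by_contra hne
      have hsep := cantorPoint_sep ω hM j w w' hne
      obtain ⟨hw1, hw2⟩ := hdist w hw
      obtain ⟨hw1', hw2'⟩ := hdist w' hw'
      set u := (P w - (x₀ - 2*L))/L with hu
      set v := (P w' - (x₀ - 2*L))/L with hv
      have hu0 : 0 ≤ u := div_nonneg (by linarith) hL0.le
      have hv0 : 0 ≤ v := div_nonneg (by linarith) hL0.le
      have hfu0 : 0 ≤ ⌊u⌋ := Int.floor_nonneg.2 hu0
      have hfv0 : 0 ≤ ⌊v⌋ := Int.floor_nonneg.2 hv0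
      have hfl : ⌊u⌋ = ⌊v⌋ := by
        have heq' : (⌊u⌋).toNat = (⌊v⌋).toNat := heq
        omega
      have h1 : |u - v| < 1 := by
        have hau : (⌊u⌋ : ℝ) ≤ u := Int.floor_le u
        have hbu : u < ⌊u⌋ + 1 := Int.lt_floor_add_one u
        have hav : (⌊v⌋ : ℝ) ≤ v := Int.floor_le v
        have hbv : v < ⌊v⌋ + 1 := Int.lt_floor_add_one v
        rw [hfl] at hau hbu
        rw [abs_sub_lt_iff]
        constructor <;> linarith
      have h2 : u - v = (P w - P w')/L := by rw [hu, hv]; ring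
      have h3 : |u - v| = |P w - P w'|/L := by rw [h2, abs_div, abs_of_pos hL0]
      have h5 : 1 ≤ |P w - P w'|/L := by
        rw [le_div_iff₀ hL0, one_mul]
        exact hsep
      rw [h3] at h1
      linarith
  have hcompl : (volume.restrict (Set.Ico (0:ℝ) 1)) (Set.Ico (0:ℝ) 1)ᶜ = 0 := by
    rw [Measure.restrict_apply measurableSet_Ico.compl, Set.compl_inter_self]
    exact measure_empty
  have hJw : ∀ w, (volume.restrict (Set.Ico (0:ℝ) 1)) (J w) ≤ ENNReal.ofReal (((A:ℝ)^j)⁻¹) := by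
    intro w
    have h1 : (volume.restrict (Set.Ico (0:ℝ) 1)) (J w) ≤ volume (J w) := by
      rw [hJ, Measure.restrict_apply measurableSet_Ico]
      exact measure_mono Set.inter_subset_left
    refine h1.trans ?_
    rw [hJ]
    simp only
    rw [Real.volume_Ico]
    apply le_of_eq
    congr 1
    rw [div_sub_div_same, add_sub_cancel_left, one_div]
  calc (volume.restrict (Set.Ico (0:ℝ) 1)) ((fun t => hfun ω hA t) ⁻¹' E)
      ≤ (volume.restrict (Set.Ico (0:ℝ) 1)) ((⋃ w ∈ V, J w) ∪ (Set.Ico (0:ℝ) 1)ᶜ) :=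
        measure_mono hsub
    _ ≤ (volume.restrict (Set.Ico (0:ℝ) 1)) (⋃ w ∈ V, J w)
        + (volume.restrict (Set.Ico (0:ℝ) 1)) (Set.Ico (0:ℝ) 1)ᶜ := measure_union_le _ _
    _ ≤ (∑ w ∈ V, (volume.restrict (Set.Ico (0:ℝ) 1)) (J w)) + 0 :=
        add_le_add (measure_biUnion_finset_le V J) hcompl.le
    _ = ∑ w ∈ V, (volume.restrict (Set.Ico (0:ℝ) 1)) (J w) := add_zero _
    _ ≤ ∑ _w ∈ V, ENNReal.ofReal (((A:ℝ)^j)⁻¹) := Finset.sum_le_sum fun w _ => hJw w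
    _ = V.card • ENNReal.ofReal (((A:ℝ)^j)⁻¹) := Finset.sum_const _
    _ ≤ 4 * ENNReal.ofReal (((A:ℝ)^j)⁻¹) := by
        rw [nsmul_eq_mul]
        refine mul_le_mul_left ?_ _
        exact_mod_cast hcard

lemma pow_logb_inv {M A : ℕ} (hM : (1:ℝ) < M) (hA0 : (0:ℝ) < A) (n : ℕ) :
    (((M:ℝ)^n)⁻¹) ^ Real.logb M A = ((A:ℝ)^n)⁻¹ := by
  have hM0 : (0:ℝ) < M := lt_trans one_pos hM
  have hMδ : (M:ℝ) ^ Real.logb M A = A := Real.rpow_logb hM0 hM.ne' hA0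
  rw [← Real.rpow_natCast (M:ℝ) n, ← Real.rpow_natCast (A:ℝ) n,
    ← Real.rpow_neg hM0.le, ← Real.rpow_mul hM0.le, mul_comm,
    Real.rpow_mul hM0.le, hMδ, Real.rpow_neg hA0.le]

lemma hausdorff_upper (hM : 1 < M) (hA1 : 1 ≤ A) :
    μH[Real.logb M A] (cantorSet M A ω) ≤ 1 := by
  classical
  have hM1 : (1:ℝ) < M := by exact_mod_cast hM
  have hM0 : (0:ℝ) < M := lt_trans one_pos hM1
  have hA0 : (0:ℝ) < A := by exact_mod_cast hA1
  set δ := Real.logb M A with hδdef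
  refine le_trans (Measure.hausdorffMeasure_le_liminf_sum (l := atTop) δ (cantorSet M A ω)
    (fun n : ℕ => ENNReal.ofReal (((M:ℝ)^(n+1))⁻¹))
    ?_ (fun n w => Set.Icc (cantorPoint M A ω (n+1) w)
      (cantorPoint M A ω (n+1) w + ((M:ℝ)^(n+1))⁻¹)) ?_ ?_) ?_
  · have h1 : Tendsto (fun n : ℕ => ((M:ℝ)^n)⁻¹) atTop (𝓝 0) := by
      have h2 := tendsto_pow_atTop_nhds_zero_of_lt_one
        (inv_nonneg.2 hM0.le) (inv_lt_one_of_one_lt₀ hM1)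
      simpa [inv_pow] using h2
    have h2 : Tendsto (fun n : ℕ => ENNReal.ofReal (((M:ℝ)^n)⁻¹)) atTop (𝓝 0) := by
      have := ENNReal.tendsto_ofReal h1
      simpa using this
    exact h2.comp (tendsto_add_atTop_nat 1)
  · refine Filter.Eventually.of_forall fun n w => ?_
    rw [Real.ediam_Icc, add_sub_cancel_left]
  · refine Filter.Eventually.of_forall fun n => ?_
    have h1 : cantorSet M A ω ⊆ cantorIter M A ω (n+1) :=
      Set.biInter_subset_of_mem (by simp : (n+1) ∈ {j : ℕ | 1 ≤ j})
    simpa [cantorIter] using h1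
  · have hsum : ∀ n : ℕ, (∑ w : Fin (n+1) → Fin A,
        (Metric.ediam (Set.Icc (cantorPoint M A ω (n+1) w)
          (cantorPoint M A ω (n+1) w + ((M:ℝ)^(n+1))⁻¹))) ^ δ) = 1 := by
      intro n
      have hterm : ∀ w : Fin (n+1) → Fin A,
          (Metric.ediam (Set.Icc (cantorPoint M A ω (n+1) w)
            (cantorPoint M A ω (n+1) w + ((M:ℝ)^(n+1))⁻¹))) ^ δ
          = ENNReal.ofReal (((A:ℝ)^(n+1))⁻¹) := by
        intro w
        rw [Real.ediam_Icc, add_sub_cancel_left,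
          ENNReal.ofReal_rpow_of_pos (by positivity), hδdef, pow_logb_inv hM1 hA0]
      rw [Finset.sum_congr rfl (fun w _ => hterm w), Finset.sum_const, Finset.card_univ]
      have hcardeq : Fintype.card (Fin (n+1) → Fin A) = A^(n+1) := by
        simp [Fintype.card_fun]
      rw [hcardeq, nsmul_eq_mul, ← ENNReal.ofReal_natCast (A^(n+1)),
        ← ENNReal.ofReal_mul (by positivity)]
      push_cast
      rw [mul_inv_cancel₀ (by positivity)]
      exact ENNReal.ofReal_one
    have heq : (fun n : ℕ => ∑ w : Fin (n+1) → Fin A,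
        (Metric.ediam (Set.Icc (cantorPoint M A ω (n+1) w)
          (cantorPoint M A ω (n+1) w + ((M:ℝ)^(n+1))⁻¹))) ^ δ) = fun _ => (1:ℝ≥0∞) :=
      funext hsum
    rw [heq, liminf_const]

lemma hausdorff_lower (hM : 1 < M) (hA2 : 1 < A) :
    (ENNReal.ofReal (4 * (A:ℝ)))⁻¹ ≤ μH[Real.logb M A] (cantorSet M A ω) := by
  classical
  have hM1 : (1:ℝ) < M := by exact_mod_cast hM
  have hM0 : (0:ℝ) < M := lt_trans one_pos hM1
  have hA1 : (1:ℝ) < A := by exact_mod_cast hA2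
  have hA0 : (0:ℝ) < A := lt_trans one_pos hA1
  have hA : 0 < A := lt_trans one_pos hA2
  set δ := Real.logb M A with hδdef
  have hδ0 : 0 ≤ δ := Real.logb_nonneg hM1 hA1.le
  set ν := volume.restrict (Set.Ico (0:ℝ) 1) with hν
  set C := ENNReal.ofReal (4 * (A:ℝ)) with hC
  rw [Measure.hausdorffMeasure_apply]
  refine le_iSup₂_of_le (ENNReal.ofReal ((M:ℝ)⁻¹)) (ENNReal.ofReal_pos.2 (by positivity)) ?_
  refine le_iInf fun t => le_iInf fun hcov => le_iInf fun hdiam => ?_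
  have hν1 : ν ((fun s => hfun ω hA s) ⁻¹' (⋃ n, t n)) = 1 := by
    have huniv : (fun s => hfun ω hA s) ⁻¹' (⋃ n, t n) = Set.univ := by
      apply Set.eq_univ_of_forall
      intro s
      exact hcov (hfun_mem_cantorSet ω hM.le hA s)
    rw [huniv, hν, Measure.restrict_apply_univ, Real.volume_Ico]
    norm_num
  have hterm : ∀ n, ν ((fun s => hfun ω hA s) ⁻¹' (t n)) ≤
      C * (⨆ _ : (t n).Nonempty, EMetric.diam (t n) ^ δ) := by
    intro n
    rcases (t n).eq_empty_or_nonempty with he | hne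
    · rw [he]
      simp
    · rw [iSup_pos hne]
      set d := EMetric.diam (t n) with hd
      have hdtop : d ≠ ⊤ := ((hdiam n).trans_lt ENNReal.ofReal_lt_top).ne
      set dr := d.toReal with hdr
      have hdr0 : 0 ≤ dr := ENNReal.toReal_nonneg
      have hdofReal : d = ENNReal.ofReal dr := (ENNReal.ofReal_toReal hdtop).symm
      have hdrM : dr ≤ (M:ℝ)⁻¹ := by
        have := ENNReal.toReal_mono ENNReal.ofReal_ne_top (hdiam n)
        rwa [ENNReal.toReal_ofReal (by positivity)] at this
      rcases eq_or_lt_of_le hdr0 with hdr00 | hdrpos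
      · have hd0 : d = 0 := by rw [hdofReal, ← hdr00]; simp
        have hb : ∀ j : ℕ, ν ((fun s => hfun ω hA s) ⁻¹' (t n))
            ≤ 4 * ENNReal.ofReal (((A:ℝ)^j)⁻¹) := fun j =>
          count_bound ω hM.le hA j (t n) (by rw [← hd, hd0]; exact zero_le)
        have htend : Tendsto (fun j : ℕ => 4 * ENNReal.ofReal (((A:ℝ)^j)⁻¹)) atTop (𝓝 0) := by
          have h1 : Tendsto (fun j : ℕ => ((A:ℝ)^j)⁻¹) atTop (𝓝 0) := by
            have h2 := tendsto_pow_atTop_nhds_zero_of_lt_one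
              (inv_nonneg.2 hA0.le) (inv_lt_one_of_one_lt₀ hA1)
            simpa [inv_pow] using h2
          have h2 : Tendsto (fun j : ℕ => ENNReal.ofReal (((A:ℝ)^j)⁻¹)) atTop (𝓝 0) := by
            have := ENNReal.tendsto_ofReal h1
            simpa using this
          have h3 : Tendsto (fun j : ℕ => 4 * ENNReal.ofReal (((A:ℝ)^j)⁻¹)) atTop
              (𝓝 (4 * 0)) := ENNReal.Tendsto.const_mul h2 (Or.inr (by norm_num))
          simpa using h3
        have hν0 : ν ((fun s => hfun ω hA s) ⁻¹' (t n)) = 0 :=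
          le_antisymm (ge_of_tendsto htend (Filter.Eventually.of_forall hb)) zero_le
        rw [hν0]
        exact zero_le
      · have hex : ∃ k : ℕ, ((M:ℝ)^(k+1))⁻¹ ≤ dr := by
          obtain ⟨m, hm⟩ := pow_unbounded_of_one_lt (dr⁻¹) hM1
          refine ⟨m, ?_⟩
          have h1 : dr⁻¹ < (M:ℝ)^(m+1) :=
            hm.trans_le (pow_le_pow_right₀ hM1.le (Nat.le_succ m))
          rw [inv_le_comm₀ (by positivity) hdrpos]
          exact h1.le
        set j := Nat.find hex with hj
        have hjspec : ((M:ℝ)^(j+1))⁻¹ ≤ dr := Nat.find_spec hex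
        have hup : d ≤ ENNReal.ofReal (((M:ℝ)^j)⁻¹) := by
          rw [hdofReal]
          apply ENNReal.ofReal_le_ofReal
          rcases Nat.eq_zero_or_pos j with hj0 | hjpos
          · rw [hj0, pow_zero, inv_one]
            have : (M:ℝ)⁻¹ ≤ 1 := by
              rw [inv_le_one_iff₀]; right; exact hM1.le
            linarith
          · have hmin := Nat.find_min hex (Nat.sub_lt hjpos Nat.one_pos)
            rw [← hj] at hmin
            have hje : j - 1 + 1 = j := Nat.succ_pred_eq_of_pos hjpos
            rw [hje] at hmin
            exact (not_le.1 hmin).le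
        have hcnt := count_bound ω hM.le hA j (t n) (hd ▸ hup)
        have hAj : ((A:ℝ)^j)⁻¹ ≤ (A:ℝ) * dr ^ δ := by
          have h1 : ((A:ℝ)^j)⁻¹ = (A:ℝ) * ((A:ℝ)^(j+1))⁻¹ := by
            rw [pow_succ]
            field_simp
          rw [h1]
          refine mul_le_mul_of_nonneg_left ?_ hA0.le
          rw [hδdef, ← pow_logb_inv hM1 hA0 (j+1)]
          exact Real.rpow_le_rpow (by positivity) hjspec hδ0
        calc ν ((fun s => hfun ω hA s) ⁻¹' (t n))
            ≤ 4 * ENNReal.ofReal (((A:ℝ)^j)⁻¹) := hcnt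
          _ ≤ 4 * ENNReal.ofReal ((A:ℝ) * dr ^ δ) :=
              mul_le_mul_right (ENNReal.ofReal_le_ofReal hAj) _
          _ = C * ENNReal.ofReal (dr ^ δ) := by
              rw [hC, ENNReal.ofReal_mul (by positivity), ENNReal.ofReal_mul (by norm_num : (0:ℝ) ≤ 4)]
              rw [mul_assoc]
              congr 1
              norm_num
          _ = C * d ^ δ := by rw [hdofReal, ENNReal.ofReal_rpow_of_pos hdrpos]
  have hsum : 1 ≤ ∑' n, ν ((fun s => hfun ω hA s) ⁻¹' (t n)) := by
    rw [← hν1, Set.preimage_iUnion]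
    exact measure_iUnion_le _
  have h2 : (1:ℝ≥0∞) ≤ C * ∑' n, (⨆ _ : (t n).Nonempty, EMetric.diam (t n) ^ δ) := by
    rw [← ENNReal.tsum_mul_left]
    exact hsum.trans (ENNReal.tsum_le_tsum hterm)
  have hC0 : C ≠ 0 := by
    rw [hC]
    exact (ENNReal.ofReal_pos.2 (by positivity)).ne'
  have hCt : C ≠ ⊤ := by rw [hC]; exact ENNReal.ofReal_ne_top
  calc C⁻¹ = C⁻¹ * 1 := (mul_one _).symm
    _ ≤ C⁻¹ * (C * ∑' n, (⨆ _ : (t n).Nonempty, EMetric.diam (t n) ^ δ)) :=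
        mul_le_mul_right h2 _
    _ = ∑' n, (⨆ _ : (t n).Nonempty, EMetric.diam (t n) ^ δ) := by
        rw [← mul_assoc, ENNReal.inv_mul_cancel hC0 hCt, one_mul]

end Aux

/-- **Hausdorff dimension of the Cantor sets.**
Let `M ≥ 3` and `2 ≤ A ≤ M - 1`. Every Cantor set `𝒞` from the iterative
construction has Hausdorff dimension `δ = log A / log M`. -/
theorem dimH_cantorSet (M A : ℕ) (hM : 3 ≤ M) (hA2 : 2 ≤ A) (hAM : A ≤ M - 1)
    (ω : Config M A) :
    dimH (cantorSet M A ω) = ENNReal.ofReal (Real.logb M A) := by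
  have hM1 : 1 < M := by omega
  have hA1 : 1 < A := by omega
  have hδ0 : 0 ≤ Real.logb M A :=
    Real.logb_nonneg (by exact_mod_cast hM1) (by exact_mod_cast hA1.le)
  have hofReal : ENNReal.ofReal (Real.logb M A)
      = (((Real.logb M A).toNNReal : ℝ≥0) : ℝ≥0∞) := rfl
  have hcoe : (((Real.logb M A).toNNReal : ℝ≥0) : ℝ) = Real.logb M A :=
    Real.coe_toNNReal _ hδ0
  apply le_antisymm
  · rw [hofReal]
    apply dimH_le_of_hausdorffMeasure_ne_top
    rw [hcoe]
    exact ((hausdorff_upper ω hM1 hA1.le).trans_lt ENNReal.one_lt_top).ne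
  · rw [hofReal]
    apply le_dimH_of_hausdorffMeasure_ne_zero
    rw [hcoe]
    intro h0
    have hlow := hausdorff_lower ω hM1 hA1
    rw [h0] at hlow
    have h1 : (ENNReal.ofReal (4 * (A:ℝ)))⁻¹ = 0 := le_antisymm hlow zero_le
    rw [ENNReal.inv_eq_zero] at h1
    exact ENNReal.ofReal_ne_top h1

end FUPRandom
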